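/- (Supervised-loss derivative identity.) Let A and B be finite types, S a positive integer, and for each u = 1, …, S let ρ̃_u be a Hermitian complex matrix indexed by A × B and φ_u : B → ℂ a unit vector with associated projection |φ_u⟩⟨φ_u| having entries φ_u b · conj(φ_u b'). Let U_1, …, U_m be unitary matrices and K_1, …, K_m Hermitian matrices, all indexed by A × B. For ε ∈ ℝ define C(ε) = (exp(iεK_m)U_m)⋯(exp(iεK_1)U_1) and ρ_u(ε) = tr_A( C(ε) ρ̃_u C(ε)† ). Set W_j = U_j⋯U_1 and V_j = U_m⋯U_{j+1}. Then the supervised loss ε ↦ (1/S) Σ_{u=1}^{S} tr( |φ_u⟩⟨φ_u| · ρ_u(ε) ) has derivative at ε = 0 equal to (i/S) · Σ_{u=1}^{S} Σ_{j=1}^{m} tr( M_{j,{u}} · K_j ), where M_{j,{u}} = [ W_j ρ̃_u W_j† , V_j† (1_A ⊗ |φ_u⟩⟨φ_u|) V_j ] and [X,Y] = XY − YX. -/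

import Mathlib

open scoped Matrix Kronecker

/-- The partial trace over `A` of a matrix indexed by `A × B`. -/
noncomputable def ptrace (A B : Type*) [Fintype A]
    (X : Matrix (A × B) (A × B) ℂ) : Matrix B B ℂ :=
  Matrix.of fun b b' => ∑ a, X (a, b) (a, b')

/-- The rank-one projection `|φ⟩⟨φ|` with entries `φ b · conj (φ b')`. -/
noncomputable def vecProj {ι : Type*} (φ : ι → ℂ) : Matrix ι ι ℂ :=
  Matrix.of fun b b' => φ b * (starRingEnd ℂ) (φ b')

/-- `C(ε) = (exp(iεK_m)U_m)⋯(exp(iεK_1)U_1)` (largest index leftmost). -/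
noncomputable def Cfun {ι : Type*} [Fintype ι] [DecidableEq ι] {m : ℕ}
    (K U : Fin m → Matrix ι ι ℂ) (ε : ℝ) : Matrix ι ι ℂ :=
  (List.ofFn fun j => NormedSpace.exp (Complex.I • ((ε : ℂ) • K j)) * U j).reverse.prod

/-- `W_j = U_j⋯U_1`. -/
noncomputable def Wmat {ι : Type*} [Fintype ι] [DecidableEq ι] {m : ℕ}
    (U : Fin m → Matrix ι ι ℂ) (j : Fin m) : Matrix ι ι ℂ :=
  ((List.ofFn U).take ((j : ℕ) + 1)).reverse.prod

/-- `V_j = U_m⋯U_{j+1}` (with `V_m = 1`). -/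
noncomputable def Vmat {ι : Type*} [Fintype ι] [DecidableEq ι] {m : ℕ}
    (U : Fin m → Matrix ι ι ℂ) (j : Fin m) : Matrix ι ι ℂ :=
  ((List.ofFn U).drop ((j : ℕ) + 1)).reverse.prod

/-- The network output `ρ(ε) = tr_A(C(ε) ρ̃ C(ε)†)`. -/
noncomputable def rhoOut {A B : Type*} [Fintype A] [Fintype B] [DecidableEq A] [DecidableEq B]
    {m : ℕ} (K U : Fin m → Matrix (A × B) (A × B) ℂ)
    (ρ : Matrix (A × B) (A × B) ℂ) (ε : ℝ) : Matrix B B ℂ :=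
  ptrace A B (Cfun K U ε * ρ * (Cfun K U ε)ᴴ)

/-- The commutator `[X, Y] = XY − YX`. -/
noncomputable def matComm {ι : Type*} [Fintype ι] (X Y : Matrix ι ι ℂ) : Matrix ι ι ℂ :=
  X * Y - Y * X

/-- `M_j = [W_j ρ W_j†, V_j† (1_A ⊗ P) V_j]`. -/
noncomputable def Mmat {A B : Type*} [Fintype A] [Fintype B] [DecidableEq A] [DecidableEq B]
    {m : ℕ} (U : Fin m → Matrix (A × B) (A × B) ℂ)
    (ρ : Matrix (A × B) (A × B) ℂ) (P : Matrix B B ℂ) (j : Fin m) :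
    Matrix (A × B) (A × B) ℂ :=
  matComm (Wmat U j * ρ * (Wmat U j)ᴴ)
    ((Vmat U j)ᴴ * ((1 : Matrix A A ℂ) ⊗ₖ P) * Vmat U j)


/-! ### Auxiliary lemmas -/

open NormedSpace

attribute [local instance] Matrix.linftyOpNormedRing Matrix.linftyOpNormedAlgebra

section Aux

variable {ι : Type*} [Fintype ι] [DecidableEq ι]

private theorem ederiv' (x : Matrix ι ι ℂ) :
    HasDerivAt (fun ε : ℝ => exp ((ε : ℂ) • x)) x 0 := by
  have h1 := hasDerivAt_exp_smul_const (𝕂 := ℂ) x ((0:ℝ) : ℂ)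
  have h2 := ((h1.hasFDerivAt.restrictScalars ℝ).comp (0:ℝ)
    Complex.ofRealCLM.hasFDerivAt).hasDerivAt
  simp at h2
  exact h2

private theorem Wsucc {m : ℕ} (U : Fin m → Matrix ι ι ℂ) (j : Fin m) :
    Wmat U j = U j * ((List.ofFn U).take (j : ℕ)).reverse.prod := by
  rw [Wmat, List.take_succ]
  have : (List.ofFn U)[(j:ℕ)]? = some (U j) := by
    rw [List.getElem?_eq_getElem (by simp [j.isLt])]
    simp
  rw [this]
  simp

private theorem VWeq {m : ℕ} (U : Fin m → Matrix ι ι ℂ) (j : Fin m) :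
    Vmat U j * Wmat U j = (List.ofFn U).reverse.prod := by
  rw [Vmat, Wmat, ← List.prod_append, ← List.reverse_append, List.take_append_drop]

private theorem cderiv {m : ℕ} (K U : Fin m → Matrix ι ι ℂ) :
    HasDerivAt (Cfun K U)
      (∑ j, Complex.I • (Vmat U j * K j * Wmat U j)) 0 := by
  classical
  set f : Fin m → ℝ → Matrix ι ι ℂ :=
    fun j ε => exp ((ε : ℂ) • (Complex.I • K j)) * U j with hf_def
  set d : Fin m → Matrix ι ι ℂ := fun j => Complex.I • K j * U j with hd_def
  have hf : ∀ j, HasDerivAt (f j) (d j) 0 := fun j => (ederiv' _).mul_const (U j)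
  set l : List (Fin m) := (List.finRange m).reverse with hl_def
  have hlen : l.length = m := by simp [hl_def]
  have h1 := (HasFDerivAt.list_prod' (𝕜 := ℝ) (l := l) (f := f)
    (f' := fun j => (1 : ℝ →L[ℝ] ℝ).smulRight (d j))
    (fun j _ => (hf j).hasFDerivAt)).hasDerivAt
  have hfun : (fun ε : ℝ => (l.map (f · ε)).prod) = Cfun K U := by
    funext ε
    have he : (fun j => f j ε) = fun j => exp (Complex.I • ((ε:ℂ) • K j)) * U j :=
      funext fun j => by rw [hf_def]; rw [smul_comm]
    rw [Cfun, hl_def, List.map_reverse, ← List.ofFn_eq_map, he]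
  have hf0 : ∀ j, f j 0 = U j := by intro j; simp [hf_def]
  rw [hfun] at h1
  have hmap : l.map (fun x => f x 0) = (List.ofFn U).reverse := by
    rw [hl_def, List.map_reverse, ← List.ofFn_eq_map]
    exact congrArg List.reverse (congrArg List.ofFn (funext hf0))
  refine h1.congr_deriv (Eq.symm ?_)
  simp only [ContinuousLinearMap.coe_sum', Finset.sum_apply,
    ContinuousLinearMap.smul_apply, ContinuousLinearMap.smulRight_apply,
    ContinuousLinearMap.one_apply, one_smul, smul_eq_mul]
  refine Fintype.sum_equiv ((Fin.revPerm (n := m)).trans (finCongr hlen.symm)) _ _ ?_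
  intro j
  have hj : ((((Fin.revPerm (n := m)).trans (finCongr hlen.symm)) j : Fin l.length) : ℕ)
      = m - 1 - (j : ℕ) := by
    simp [Fin.val_rev]
    omega
  set i : Fin l.length := ((Fin.revPerm (n := m)).trans (finCongr hlen.symm)) j with hi_def
  have hjm := j.isLt
  have hi : (i : ℕ) = m - 1 - (j : ℕ) := hj
  have hget : l[i] = j := by
    simp only [hl_def, List.getElem_reverse, List.getElem_finRange]
    apply Fin.ext
    simp [hi]
    omega
  have htake : (List.map (fun x => f x 0) (List.take (↑i) l)).prod = Vmat U j := by
    rw [List.map_take, hmap, List.take_reverse, List.length_ofFn,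
      show m - (i:ℕ) = (j:ℕ)+1 by omega, Vmat]
  have hdrop : (List.map (fun x => f x 0) (List.drop ((i:ℕ)).succ l)).prod
      = ((List.ofFn U).take (j:ℕ)).reverse.prod := by
    rw [List.map_drop, hmap, List.drop_reverse, List.length_ofFn,
      show m - ((i:ℕ)).succ = (j:ℕ) by omega]
  rw [htake, hdrop, hget, hd_def, Wsucc U j]
  simp only [op_smul_eq_mul, smul_mul_assoc, mul_smul_comm, mul_assoc]

private theorem perj (Q V W Kj ρ : Matrix ι ι ℂ) (hKj : Kjᴴ = Kj) :
    (Q * (Complex.I • (V * Kj * W) * ρ * (V * W)ᴴ)).trace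
      + (Q * ((V * W) * ρ * (Complex.I • (V * Kj * W))ᴴ)).trace
    = Complex.I * (matComm (W * ρ * Wᴴ) (Vᴴ * Q * V) * Kj).trace := by
  have rot : ∀ X Y : Matrix ι ι ℂ, (X*Y).trace = (Y*X).trace :=
    fun X Y => Matrix.trace_mul_comm X Y
  have e1 : (Q * (V * Kj * W * ρ * (V * W)ᴴ)).trace
      = ((W * ρ * Wᴴ) * (Vᴴ * Q * V) * Kj).trace := by
    rw [Matrix.conjTranspose_mul]
    simp only [mul_assoc]
    rw [rot Q]; simp only [mul_assoc]
    rw [rot V]; simp only [mul_assoc]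
    rw [rot Kj]; simp only [mul_assoc]
  have e2 : (Q * ((V * W) * ρ * (Wᴴ * Kj * Vᴴ))).trace
      = ((Vᴴ * Q * V) * (W * ρ * Wᴴ) * Kj).trace := by
    simp only [mul_assoc]
    rw [rot Vᴴ]; simp only [mul_assoc]
  have hD : (Complex.I • (V * Kj * W))ᴴ = (-Complex.I) • (Wᴴ * Kj * Vᴴ) := by
    rw [Matrix.conjTranspose_smul]
    simp only [Matrix.conjTranspose_mul, hKj, Complex.star_def, Complex.conj_I]
    rw [mul_assoc]
  rw [hD, matComm, Matrix.sub_mul, Matrix.trace_sub, mul_sub, ← e1, ← e2]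
  simp only [Matrix.smul_mul, Matrix.mul_smul, Matrix.trace_smul, smul_eq_mul]
  ring

end Aux

section AuxAB

variable {A B : Type*} [Fintype A] [Fintype B] [DecidableEq A] [DecidableEq B]

private theorem trace_ptrace (P : Matrix B B ℂ) (X : Matrix (A × B) (A × B) ℂ) :
    (P * ptrace A B X).trace = (((1 : Matrix A A ℂ) ⊗ₖ P) * X).trace := by
  have h1 : (P * ptrace A B X).trace = ∑ b, ∑ b', ∑ a, P b b' * X (a,b') (a,b) := by
    simp [Matrix.trace, Matrix.diag, Matrix.mul_apply, ptrace, Finset.mul_sum]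
  have h2 : (((1 : Matrix A A ℂ) ⊗ₖ P) * X).trace
      = ∑ a, ∑ b, ∑ b', P b b' * X (a,b') (a,b) := by
    simp [Matrix.trace, Matrix.diag, Matrix.mul_apply, Matrix.kroneckerMap_apply,
      Matrix.one_apply, Fintype.sum_prod_type, ite_mul, zero_mul, Finset.sum_ite_eq]
  rw [h1, h2]
  have h3 : ∀ b : B, (∑ b', ∑ a, P b b' * X (a,b') (a,b))
      = ∑ a, ∑ b', P b b' * X (a,b') (a,b) := fun b => Finset.sum_comm
  simp only [h3]
  rw [Finset.sum_comm]

private theorem value_per {m : ℕ} (U K : Fin m → Matrix (A × B) (A × B) ℂ)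
    (hK : ∀ j, (K j)ᴴ = K j) (ρ : Matrix (A × B) (A × B) ℂ) (P : Matrix B B ℂ) :
    (((1 : Matrix A A ℂ) ⊗ₖ P) *
        ((∑ j, Complex.I • (Vmat U j * K j * Wmat U j)) * ρ * ((List.ofFn U).reverse.prod)ᴴ
          + (List.ofFn U).reverse.prod * ρ *
            (∑ j, Complex.I • (Vmat U j * K j * Wmat U j))ᴴ)).trace
      = Complex.I * ∑ j, (Mmat U ρ P j * K j).trace := by
  rw [Matrix.mul_add, Matrix.trace_add, Matrix.conjTranspose_sum]
  rw [Finset.sum_mul, Finset.sum_mul, Finset.mul_sum, Matrix.trace_sum]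
  rw [Finset.mul_sum, Finset.mul_sum, Matrix.trace_sum]
  rw [Finset.mul_sum, ← Finset.sum_add_distrib]
  refine Finset.sum_congr rfl fun j _ => ?_
  rw [← VWeq U j, Mmat]
  exact perj _ (Vmat U j) (Wmat U j) (K j) ρ (hK j)

end AuxAB

/-- Supervised-loss derivative identity: the derivative at `ε = 0` of
`ε ↦ (1/S) Σ_u tr(|φ_u⟩⟨φ_u| · ρ_u(ε))` equals `(i/S) · Σ_u Σ_j tr(M_{j,{u}} · K_j)`. -/
theorem stmt17 (A B : Type*) [Fintype A] [Fintype B]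
    [DecidableEq A] [DecidableEq B] (S m : ℕ) (hS : 0 < S)
    (ρt : Fin S → Matrix (A × B) (A × B) ℂ) (hρt : ∀ u, (ρt u)ᴴ = ρt u)
    (φ : Fin S → B → ℂ) (hφ : ∀ u, ∑ b, Complex.normSq (φ u b) = 1)
    (U K : Fin m → Matrix (A × B) (A × B) ℂ)
    (hU : ∀ j, U j * (U j)ᴴ = 1 ∧ (U j)ᴴ * U j = 1)
    (hK : ∀ j, (K j)ᴴ = K j) :
    HasDerivAt
      (fun ε : ℝ => (1 / (S : ℂ)) * ∑ u, (vecProj (φ u) * rhoOut K U (ρt u) ε).trace)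
      ((Complex.I / (S : ℂ)) * ∑ u, ∑ j,
        (Mmat U (ρt u) (vecProj (φ u)) j * K j).trace) 0 := by
  classical
  letI : NormedRing (Matrix (A × B) (A × B) ℂ) := Matrix.linftyOpNormedRing
  letI : NormedAlgebra ℝ (Matrix (A × B) (A × B) ℂ) := Matrix.linftyOpNormedAlgebra
  letI : NormedAlgebra ℂ (Matrix (A × B) (A × B) ℂ) := Matrix.linftyOpNormedAlgebra
  set D : Matrix (A × B) (A × B) ℂ := ∑ j, Complex.I • (Vmat U j * K j * Wmat U j) with hD_def
  set T : Matrix (A × B) (A × B) ℂ := (List.ofFn U).reverse.prod with hT_def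
  have hC : HasDerivAt (Cfun K U) D 0 := cderiv K U
  have hC0 : Cfun K U 0 = T := by
    rw [Cfun, hT_def]
    exact congrArg (fun L : List (Matrix (A × B) (A × B) ℂ) => L.reverse.prod)
      (congrArg List.ofFn (funext fun j => by simp))
  -- conjugate transpose as a continuous ℝ-linear map
  haveI : FiniteDimensional ℝ (Matrix (A × B) (A × B) ℂ) := inferInstance
  let ctlm : Matrix (A × B) (A × B) ℂ →ₗ[ℝ] Matrix (A × B) (A × B) ℂ :=
    { toFun := fun X => Xᴴ
      map_add' := fun X Y => Matrix.conjTranspose_add X Y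
      map_smul' := fun r X => by
        ext i j
        simp [Matrix.conjTranspose_apply, star_smul] }
  let CT := LinearMap.toContinuousLinearMap ctlm
  have hCT : HasDerivAt (fun ε => (Cfun K U ε)ᴴ) Dᴴ 0 :=
    CT.hasFDerivAt.comp_hasDerivAt 0 hC
  -- the scalar observables as continuous ℝ-linear maps
  let lc : Fin S → (Matrix (A × B) (A × B) ℂ →ₗ[ℝ] ℂ) := fun u =>
    { toFun := fun X => (vecProj (φ u) * ptrace A B X).trace
      map_add' := fun X Y => by
        show (vecProj (φ u) * ptrace A B (X + Y)).trace
          = (vecProj (φ u) * ptrace A B X).trace + (vecProj (φ u) * ptrace A B Y).trace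
        have : ptrace A B (X + Y) = ptrace A B X + ptrace A B Y := by
          ext b b'
          simp [ptrace, Finset.sum_add_distrib]
        rw [this, Matrix.mul_add, Matrix.trace_add]
      map_smul' := fun r X => by
        show (vecProj (φ u) * ptrace A B (r • X)).trace
          = r • (vecProj (φ u) * ptrace A B X).trace
        have : ptrace A B (r • X) = r • ptrace A B X := by
          ext b b'
          simp [ptrace, Finset.smul_sum]
        rw [this, Matrix.mul_smul, Matrix.trace_smul] }
  let Lc : Fin S → (Matrix (A × B) (A × B) ℂ →L[ℝ] ℂ) := fun u =>
    LinearMap.toContinuousLinearMap (lc u)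
  have hmul : ∀ u : Fin S, HasDerivAt (fun ε => Cfun K U ε * ρt u * (Cfun K U ε)ᴴ)
      (D * ρt u * Tᴴ + T * ρt u * Dᴴ) 0 := by
    intro u
    have := (hC.mul_const (ρt u)).mul hCT
    rw [hC0] at this
    exact this
  have h2 : ∀ u : Fin S, HasDerivAt
      (fun ε => (Lc u) (Cfun K U ε * ρt u * (Cfun K U ε)ᴴ))
      ((Lc u) (D * ρt u * Tᴴ + T * ρt u * Dᴴ)) 0 := fun u =>
    (Lc u).hasFDerivAt.comp_hasDerivAt 0 (hmul u)
  have h3 : HasDerivAt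
      (fun ε => (1 / (S : ℂ)) * ∑ u, (Lc u) (Cfun K U ε * ρt u * (Cfun K U ε)ᴴ))
      ((1 / (S : ℂ)) * ∑ u, (Lc u) (D * ρt u * Tᴴ + T * ρt u * Dᴴ)) 0 :=
    (HasDerivAt.fun_sum fun u _ => h2 u).const_mul _
  have hfeq : (fun ε : ℝ => (1 / (S : ℂ)) * ∑ u, (vecProj (φ u) * rhoOut K U (ρt u) ε).trace)
      = fun ε => (1 / (S : ℂ)) * ∑ u, (Lc u) (Cfun K U ε * ρt u * (Cfun K U ε)ᴴ) := by
    funext ε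
    congr 1
  rw [hfeq]
  convert h3 using 1
  have hval : ∀ u : Fin S, (Lc u) (D * ρt u * Tᴴ + T * ρt u * Dᴴ)
      = Complex.I * ∑ j, (Mmat U (ρt u) (vecProj (φ u)) j * K j).trace := by
    intro u
    have h4 : (Lc u) (D * ρt u * Tᴴ + T * ρt u * Dᴴ)
        = (vecProj (φ u) * ptrace A B (D * ρt u * Tᴴ + T * ρt u * Dᴴ)).trace := rfl
    rw [h4, trace_ptrace, hD_def, hT_def]
    exact value_per U K hK (ρt u) (vecProj (φ u))
  simp only [hval]
  rw [← Finset.mul_sum]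
  ring
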